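/- Let T be a finite tree on n ≥ 4 vertices that admits a redundant identifying code. Then RED:IC(T) = n if and only if every vertex v of T satisfies at least one of the following: (i) v is a leaf; (ii) v is a support vertex; (iii) v is adjacent to a support vertex of degree 3; (iv) there exist vertices w, u with v–w–u a path in T and both w and u of degree 2. -/

import Mathlib

open scoped symmDiff

variable {V : Type*}

/-- The closed neighborhood of a vertex. -/
def closedNbhd (G : SimpleGraph V) (v : V) : Set V := insert v (G.neighborSet v)

/-- A vertex `v` is at least `k`-dominated by `S`. -/
def kDominated (G : SimpleGraph V) (S : Set V) (k : ℕ) (v : V) : Prop :=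
  k ≤ (closedNbhd G v ∩ S).ncard

/-- Two vertices `u` and `v` are `k`-distinguished by `S`. -/
def kDistinguished (G : SimpleGraph V) (S : Set V) (k : ℕ) (u v : V) : Prop :=
  k ≤ ((closedNbhd G u ∩ S) ∆ (closedNbhd G v ∩ S)).ncard

/-- `S` is an identifying code of `G`. -/
def IsIC (G : SimpleGraph V) (S : Set V) : Prop :=
  (∀ v, kDominated G S 1 v) ∧ ∀ u v, u ≠ v → kDistinguished G S 1 u v

/-- `S` is a redundant identifying code of `G`. -/
def IsRedIC (G : SimpleGraph V) (S : Set V) : Prop :=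
  (∀ v, kDominated G S 2 v) ∧ ∀ u v, u ≠ v → kDistinguished G S 2 u v

/-- The minimum cardinality of a redundant identifying code of `G`. -/
noncomputable def redIC (G : SimpleGraph V) : ℕ :=
  sInf {n | ∃ S : Set V, IsRedIC G S ∧ S.ncard = n}

/-- The degree of a vertex, as the cardinality of its open neighborhood. -/
noncomputable def deg (G : SimpleGraph V) (v : V) : ℕ := (G.neighborSet v).ncard

/-- A leaf is a vertex of degree 1. -/
def IsLeaf (G : SimpleGraph V) (v : V) : Prop := deg G v = 1

/-- A support vertex is a vertex adjacent to a leaf. -/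
def IsSupport (G : SimpleGraph V) (v : V) : Prop := ∃ u, G.Adj v u ∧ IsLeaf G u

/-- Two distinct vertices are closed twins if they have the same closed neighborhood. -/
def ClosedTwins (G : SimpleGraph V) (u v : V) : Prop :=
  u ≠ v ∧ closedNbhd G u = closedNbhd G v

section Aux

variable {G : SimpleGraph V}

lemma mem_closedNbhd {u v : V} : u ∈ closedNbhd G v ↔ u = v ∨ G.Adj v u := by
  simp [closedNbhd]

lemma inter_symmDiff (A B S : Set V) : (A ∩ S) ∆ (B ∩ S) = (A ∆ B) ∩ S := by
  ext x; simp only [Set.mem_symmDiff, Set.mem_inter_iff]; tauto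

lemma inter_univ_diff (A : Set V) (v : V) : A ∩ (Set.univ \ {v}) = A \ {v} := by
  ext x; simp

variable [Fintype V]

lemma ncard_closedNbhd (v : V) : (closedNbhd G v).ncard = deg G v + 1 := by
  rw [closedNbhd, Set.ncard_insert_of_notMem (by simp) (Set.toFinite _), deg]

lemma nbhd_of_leaf {u v : V} (h1 : deg G u = 1) (h : G.Adj u v) :
    G.neighborSet u = {v} := by
  obtain ⟨a, ha⟩ := Set.ncard_eq_one.mp h1
  have hv : v ∈ G.neighborSet u := h
  rw [ha] at hv ⊢
  simp only [Set.mem_singleton_iff] at hv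
  rw [hv]

lemma isRedIC_mono {S T : Set V} (hST : S ⊆ T) (h : IsRedIC G S) : IsRedIC G T := by
  obtain ⟨h1, h2⟩ := h
  refine ⟨fun v => le_trans (h1 v)
    (Set.ncard_le_ncard (Set.inter_subset_inter_right _ hST) (Set.toFinite _)),
    fun u v huv => le_trans (h2 u v huv) ?_⟩
  rw [inter_symmDiff, inter_symmDiff]
  exact Set.ncard_le_ncard (Set.inter_subset_inter_right _ hST) (Set.toFinite _)

lemma deg_pos (hc : G.Connected) (hn : 2 ≤ Fintype.card V) (v : V) : 0 < deg G v := by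
  obtain ⟨u, hu⟩ := Fintype.exists_ne_of_one_lt_card (by omega) v
  obtain ⟨p⟩ := hc.preconnected v u
  rw [deg, Set.ncard_pos (Set.toFinite _)]
  cases p with
  | nil => exact absurd rfl hu
  | cons h q => exact ⟨_, h⟩

end Aux

section Acyclic

variable {G : SimpleGraph V}

lemma adj_del {a b x y : V} (h : G.Adj x y) (hne : s(x, y) ≠ s(a, b)) :
    (G \ SimpleGraph.fromEdgeSet {s(a, b)}).Adj x y := by
  rw [SimpleGraph.sdiff_adj]
  refine ⟨h, fun hc => hne ?_⟩
  simpa using ((SimpleGraph.fromEdgeSet_adj _).mp hc).1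

lemma no_triangle (hT : G.IsAcyclic) {a b c : V} (hab : G.Adj a b) (hbc : G.Adj b c)
    (hca : G.Adj c a) : False := by
  have hbr := SimpleGraph.isAcyclic_iff_forall_adj_isBridge.mp hT hab
  rw [SimpleGraph.isBridge_iff] at hbr
  refine hbr (SimpleGraph.Adj.reachable (adj_del hca.symm ?_) |>.trans
    (SimpleGraph.Adj.reachable (adj_del hbc.symm ?_)))
  · intro h
    rw [Sym2.eq_iff] at h
    rcases h with ⟨h1, h2⟩ | ⟨h1, h2⟩ <;> subst_vars <;> simp_all [G.irrefl]
  · intro h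
    rw [Sym2.eq_iff] at h
    rcases h with ⟨h1, h2⟩ | ⟨h1, h2⟩ <;> subst_vars <;> simp_all [G.irrefl]

lemma no_c4 (hT : G.IsAcyclic) {a b x y : V} (hne : a ≠ b) (hxy : x ≠ y)
    (hax : G.Adj a x) (hbx : G.Adj b x) (hay : G.Adj a y) (hby : G.Adj b y) : False := by
  have hbr := SimpleGraph.isAcyclic_iff_forall_adj_isBridge.mp hT hax
  rw [SimpleGraph.isBridge_iff] at hbr
  refine hbr ((SimpleGraph.Adj.reachable (adj_del hay ?_)).trans
    ((SimpleGraph.Adj.reachable (adj_del hby.symm ?_)).trans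
      (SimpleGraph.Adj.reachable (adj_del hbx ?_))))
  · intro h
    rw [Sym2.eq_iff] at h
    rcases h with ⟨h1, h2⟩ | ⟨h1, h2⟩ <;> subst_vars <;> simp_all [G.irrefl]
  · intro h
    rw [Sym2.eq_iff] at h
    rcases h with ⟨h1, h2⟩ | ⟨h1, h2⟩ <;> subst_vars <;> simp_all [G.irrefl]
  · intro h
    rw [Sym2.eq_iff] at h
    rcases h with ⟨h1, h2⟩ | ⟨h1, h2⟩ <;> subst_vars <;> simp_all [G.irrefl]

lemma symmDiff_closedNbhd_adj (hT : G.IsAcyclic) {a b : V} (hab : G.Adj a b) :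
    closedNbhd G a ∆ closedNbhd G b =
      (G.neighborSet a \ {b}) ∪ (G.neighborSet b \ {a}) := by
  ext x
  simp only [Set.mem_symmDiff, mem_closedNbhd, Set.mem_union, Set.mem_diff,
    SimpleGraph.mem_neighborSet, Set.mem_singleton_iff]
  constructor
  · rintro (⟨hA, hB⟩ | ⟨hB, hA⟩)
    · rcases hA with rfl | hA
      · exact absurd (Or.inr hab.symm) hB
      · exact Or.inl ⟨hA, fun h => hB (Or.inl h)⟩
    · rcases hB with rfl | hB
      · exact absurd (Or.inr hab) hA
      · exact Or.inr ⟨hB, fun h => hA (Or.inl h)⟩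
  · rintro (⟨hA, hxb⟩ | ⟨hB, hxa⟩)
    · refine Or.inl ⟨Or.inr hA, ?_⟩
      rintro (rfl | hB)
      · exact hxb rfl
      · exact no_triangle hT hab hB hA.symm
    · refine Or.inr ⟨Or.inr hB, ?_⟩
      rintro (rfl | hA)
      · exact hxa rfl
      · exact no_triangle hT hab hB hA.symm

end Acyclic

section Main

variable [Fintype V] {G : SimpleGraph V}

lemma closedNbhd_diff_self (v : V) : closedNbhd G v \ {v} = G.neighborSet v := by
  ext x
  simp only [closedNbhd, Set.mem_diff, Set.mem_insert_iff, SimpleGraph.mem_neighborSet,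
    Set.mem_singleton_iff]
  constructor
  · rintro ⟨rfl | h, hne⟩
    · exact absurd rfl hne
    · exact h
  · intro h
    exact ⟨Or.inr h, h.ne'⟩

lemma forward (hT : G.IsTree) {v : V}
    (hP : IsLeaf G v ∨ IsSupport G v ∨
      (∃ w : V, G.Adj v w ∧ IsSupport G w ∧ deg G w = 3) ∨
      (∃ w u : V, G.Adj v w ∧ G.Adj w u ∧ u ≠ v ∧ deg G w = 2 ∧ deg G u = 2)) :
    ¬ IsRedIC G (Set.univ \ {v}) := by
  rintro ⟨hdom, hdis⟩
  have hleaf_fail : ¬ IsLeaf G v := by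
    intro hl
    have h := hdom v
    rw [kDominated, inter_univ_diff, closedNbhd_diff_self] at h
    rw [IsLeaf, deg] at hl
    omega
  rcases hP with hl | ⟨u, huv, hu⟩ | ⟨w, hvw, ⟨a, hwa, ha⟩, hdw⟩ |
      ⟨w, u, hvw, hwu, hne, hdw, hdu⟩
  · exact hleaf_fail hl
  · -- v is a support vertex with leaf u
    have hNu : G.neighborSet u = {v} := nbhd_of_leaf hu huv.symm
    have h := hdom u
    rw [kDominated, inter_univ_diff, closedNbhd, hNu] at h
    have h2 : (insert u ({v} : Set V)) \ {v} = {u} := by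
      ext x
      simp only [Set.mem_diff, Set.mem_insert_iff, Set.mem_singleton_iff]
      constructor
      · rintro ⟨rfl | rfl, hne⟩
        · rfl
        · exact absurd rfl hne
      · rintro rfl
        exact ⟨Or.inl rfl, huv.ne'⟩
    rw [h2, Set.ncard_singleton] at h
    omega
  · -- v adjacent to support vertex w of degree 3, a the leaf at w
    by_cases hva : v = a
    · exact hleaf_fail (hva ▸ ha)
    · have h := hdis a w hwa.ne'
      rw [kDistinguished, inter_symmDiff, inter_univ_diff,
        symmDiff_closedNbhd_adj hT.IsAcyclic hwa.symm, nbhd_of_leaf ha hwa.symm] at h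
      have hsimp : (({w} : Set V) \ {w}) ∪ (G.neighborSet w \ {a}) =
          G.neighborSet w \ {a} := by simp
      rw [hsimp] at h
      have haw : a ∈ G.neighborSet w := hwa
      have hvmem : v ∈ G.neighborSet w \ {a} := ⟨hvw.symm, hva⟩
      rw [Set.ncard_diff_singleton_of_mem hvmem,
        Set.ncard_diff_singleton_of_mem haw] at h
      rw [deg] at hdw
      omega
  · -- path v - w - u with deg w = deg u = 2
    have h := hdis w u hwu.ne
    rw [kDistinguished, inter_symmDiff, inter_univ_diff,
      symmDiff_closedNbhd_adj hT.IsAcyclic hwu] at h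
    have hNw : G.neighborSet w = {v, u} := by
      refine (Set.eq_of_subset_of_ncard_le ?_ ?_ (Set.toFinite _)).symm
      · rintro x (rfl | rfl)
        · exact hvw.symm
        · exact hwu
      · rw [Set.ncard_pair (Ne.symm hne)]
        exact le_of_eq hdw
    have hsub : ((G.neighborSet w \ {u}) ∪ (G.neighborSet u \ {w})) \ {v} ⊆
        G.neighborSet u \ {w} := by
      rintro x ⟨hx, hxv⟩
      rcases hx with hx | hx
      · exfalso
        rw [hNw] at hx
        rcases hx.1 with rfl | rfl
        · exact hxv rfl
        · exact hx.2 rfl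
      · exact hx
    have hle := Set.ncard_le_ncard hsub (Set.toFinite _)
    have hwu' : w ∈ G.neighborSet u := hwu.symm
    rw [Set.ncard_diff_singleton_of_mem hwu'] at hle
    rw [deg] at hdu
    omega

end Main

section Main2

variable [Fintype V] {G : SimpleGraph V}

lemma adj_case (hT : G.IsAcyclic) {a b v : V} (hadj : G.Adj a b)
    (hsum : deg G a + deg G b = 4) (h1a : 1 ≤ deg G a) (h1b : 1 ≤ deg G b)
    (hv : v ∈ G.neighborSet a \ {b}) :
    (∃ w : V, G.Adj v w ∧ IsSupport G w ∧ deg G w = 3) ∨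
    (∃ w u : V, G.Adj v w ∧ G.Adj w u ∧ u ≠ v ∧ deg G w = 2 ∧ deg G u = 2) := by
  obtain ⟨hva, hvb⟩ := hv
  have hva' : G.Adj a v := hva
  have hcases : deg G a = 1 ∨ (deg G a = 2 ∧ deg G b = 2) ∨
      (deg G a = 3 ∧ deg G b = 1) := by omega
  rcases hcases with h | ⟨h2a, h2b⟩ | ⟨h3a, h1b'⟩
  · have hN := nbhd_of_leaf h hadj
    rw [hN] at hva
    exact absurd hva hvb
  · exact Or.inr ⟨a, b, hva'.symm, hadj, Ne.symm hvb, h2a, h2b⟩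
  · exact Or.inl ⟨a, hva'.symm, ⟨b, hadj, h1b'⟩, h3a⟩

lemma nonadj_subset (hΔ : closedNbhd G a ∆ closedNbhd G b = {a, b})
    (hadj : ¬ G.Adj a b) (hba : ¬ G.Adj b a) :
    G.neighborSet a ⊆ G.neighborSet b := by
  intro x hx
  have hx' : G.Adj a x := hx
  have hxA : x ∈ closedNbhd G a := Or.inr hx'
  by_cases hxB : x ∈ closedNbhd G b
  · rcases mem_closedNbhd.mp hxB with rfl | h
    · exact absurd hx' hadj
    · exact h
  · have : x ∈ closedNbhd G a ∆ closedNbhd G b := Or.inl ⟨hxA, hxB⟩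
    rw [hΔ] at this
    rcases this with rfl | rfl
    · exact absurd hx' (G.irrefl)
    · exact absurd hx' hadj

lemma reverse (hT : G.IsTree) (hn : 2 ≤ Fintype.card V) (huniv : IsRedIC G Set.univ)
    (v : V) (hfail : ¬ IsRedIC G (Set.univ \ {v})) :
    IsLeaf G v ∨ IsSupport G v ∨
      (∃ w : V, G.Adj v w ∧ IsSupport G w ∧ deg G w = 3) ∨
      (∃ w u : V, G.Adj v w ∧ G.Adj w u ∧ u ≠ v ∧ deg G w = 2 ∧ deg G u = 2) := by
  by_contra hP
  rw [not_or, not_or, not_or] at hP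
  obtain ⟨hP1, hP2, hP3, hP4⟩ := hP
  apply hfail
  constructor
  · -- domination
    intro u
    rw [kDominated, inter_univ_diff]
    have hdpos := deg_pos hT.isConnected hn u
    by_cases huv : v ∈ closedNbhd G u
    · rw [Set.ncard_diff_singleton_of_mem huv, ncard_closedNbhd]
      suffices h : 2 ≤ deg G u by omega
      by_contra hlt
      have hdu : deg G u = 1 := by omega
      rcases mem_closedNbhd.mp huv with rfl | h
      · exact hP1 hdu
      · exact hP2 ⟨u, h.symm, hdu⟩
    · rw [Set.diff_singleton_eq_self huv, ncard_closedNbhd]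
      omega
  · -- distinguishing
    intro a b hab
    rw [kDistinguished, inter_symmDiff, inter_univ_diff]
    have h2 := huniv.2 a b hab
    rw [kDistinguished, Set.inter_univ, Set.inter_univ] at h2
    by_cases hv : v ∈ closedNbhd G a ∆ closedNbhd G b
    · rw [Set.ncard_diff_singleton_of_mem hv]
      suffices h3 : 3 ≤ (closedNbhd G a ∆ closedNbhd G b).ncard by omega
      by_contra hlt
      push_neg at hlt
      have hΔ2 : (closedNbhd G a ∆ closedNbhd G b).ncard = 2 := by omega
      exfalso
      have h1a := deg_pos hT.isConnected hn a
      have h1b := deg_pos hT.isConnected hn b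
      by_cases hadj : G.Adj a b
      · -- adjacent case
        rw [symmDiff_closedNbhd_adj hT.IsAcyclic hadj] at hΔ2 hv
        have hdisj : Disjoint (G.neighborSet a \ {b}) (G.neighborSet b \ {a}) := by
          rw [Set.disjoint_left]
          rintro x ⟨hxa, _⟩ ⟨hxb, _⟩
          exact no_triangle hT.IsAcyclic hadj (hxb : G.Adj b x) (hxa : G.Adj a x).symm
        rw [Set.ncard_union_eq hdisj (Set.toFinite _) (Set.toFinite _)] at hΔ2
        have hca : (G.neighborSet a \ {b}).ncard = deg G a - 1 :=
          Set.ncard_diff_singleton_of_mem (hadj : b ∈ G.neighborSet a)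
        have hcb : (G.neighborSet b \ {a}).ncard = deg G b - 1 :=
          Set.ncard_diff_singleton_of_mem (hadj.symm : a ∈ G.neighborSet b)
        have hsum : deg G a + deg G b = 4 := by
          rw [hca, hcb] at hΔ2
          omega
        rcases hv with hv | hv
        · rcases adj_case hT.IsAcyclic hadj hsum (by omega) (by omega) hv with h | h
          · exact hP3 h
          · exact hP4 h
        · rcases adj_case hT.IsAcyclic hadj.symm (by omega) (by omega) (by omega) hv
            with h | h
          · exact hP3 h
          · exact hP4 h
      · -- non-adjacent case
        have hba : ¬ G.Adj b a := fun h => hadj h.symm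
        have haB : a ∉ closedNbhd G b := by
          rw [mem_closedNbhd]
          rintro (rfl | h)
          · exact hab rfl
          · exact hba h
        have hbA : b ∉ closedNbhd G a := by
          rw [mem_closedNbhd]
          rintro (rfl | h)
          · exact hab rfl
          · exact hadj h
        have hsub : ({a, b} : Set V) ⊆ closedNbhd G a ∆ closedNbhd G b := by
          rintro x (rfl | rfl)
          · exact Or.inl ⟨Or.inl rfl, haB⟩
          · exact Or.inr ⟨Or.inl rfl, hbA⟩
        have hΔ : closedNbhd G a ∆ closedNbhd G b = {a, b} := by
          refine (Set.eq_of_subset_of_ncard_le hsub ?_ (Set.toFinite _)).symm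
          rw [Set.ncard_pair hab, hΔ2]
        have hNab : G.neighborSet a = G.neighborSet b := by
          apply Set.Subset.antisymm (nonadj_subset hΔ hadj hba)
          apply nonadj_subset _ hba hadj
          rw [symmDiff_comm, hΔ, Set.pair_comm]
        have hdeg1 : deg G a = 1 := by
          by_contra hd
          have h2d : 1 < (G.neighborSet a).ncard := by
            rw [deg] at h1a hd
            omega
          obtain ⟨x, y, hx, hy, hxy⟩ := (Set.one_lt_ncard_iff (Set.toFinite _)).mp h2d
          have hbx : G.Adj b x := by
            have : x ∈ G.neighborSet b := hNab ▸ hx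
            exact this
          have hby : G.Adj b y := by
            have : y ∈ G.neighborSet b := hNab ▸ hy
            exact this
          exact no_c4 hT.IsAcyclic hab hxy (hx : G.Adj a x) hbx (hy : G.Adj a y) hby
        have hdeg1b : deg G b = 1 := by
          rw [deg, ← hNab]
          exact hdeg1
        rw [hΔ] at hv
        rcases hv with rfl | rfl
        · exact hP1 hdeg1
        · exact hP1 hdeg1b
    · rw [Set.diff_singleton_eq_self hv]
      exact h2

end Main2

theorem stmt_15' {V : Type*} [Fintype V] (G : SimpleGraph V) (hT : G.IsTree)
    (hn : 4 ≤ Fintype.card V) (hex : ∃ S : Set V, IsRedIC G S) :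
    redIC G = Fintype.card V ↔
      ∀ v : V, IsLeaf G v ∨ IsSupport G v ∨
        (∃ w : V, G.Adj v w ∧ IsSupport G w ∧ deg G w = 3) ∨
        (∃ w u : V, G.Adj v w ∧ G.Adj w u ∧ u ≠ v ∧ deg G w = 2 ∧ deg G u = 2) := by
  obtain ⟨S0, hS0⟩ := hex
  have huniv : IsRedIC G Set.univ := isRedIC_mono (Set.subset_univ _) hS0
  have hcard : (Set.univ : Set V).ncard = Fintype.card V := by
    rw [Set.ncard_univ, Nat.card_eq_fintype_card]
  constructor
  · intro h v
    refine reverse hT (by omega) huniv v ?_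
    intro hcode
    have hmem : (Fintype.card V - 1) ∈ {n | ∃ S : Set V, IsRedIC G S ∧ S.ncard = n} := by
      refine ⟨Set.univ \ {v}, hcode, ?_⟩
      rw [Set.ncard_diff_singleton_of_mem (Set.mem_univ v), hcard]
    have hle := Nat.sInf_le hmem
    rw [redIC] at h
    omega
  · intro hP
    have hall : ∀ S : Set V, IsRedIC G S → S = Set.univ := by
      intro S hS
      by_contra hne
      obtain ⟨v, hv⟩ : ∃ v, v ∉ S := by
        by_contra h
        push_neg at h
        exact hne (Set.eq_univ_iff_forall.mpr h)
      have hsub : S ⊆ Set.univ \ {v} := by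
        intro x hx
        refine ⟨Set.mem_univ x, ?_⟩
        rintro rfl
        exact hv hx
      exact forward hT (hP v) (isRedIC_mono hsub hS)
    have h1 : Fintype.card V ∈ {n | ∃ S : Set V, IsRedIC G S ∧ S.ncard = n} :=
      ⟨Set.univ, huniv, hcard⟩
    rw [redIC]
    refine le_antisymm (Nat.sInf_le h1) ?_
    obtain ⟨S, hS, hcardS⟩ := Nat.sInf_mem (Set.nonempty_of_mem h1)
    rw [← hcardS, hall S hS, hcard]

theorem stmt_15 {V : Type*} [Fintype V] (G : SimpleGraph V) (hT : G.IsTree)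
    (hn : 4 ≤ Fintype.card V) (hex : ∃ S : Set V, IsRedIC G S) :
    redIC G = Fintype.card V ↔
      ∀ v : V, IsLeaf G v ∨ IsSupport G v ∨
        (∃ w : V, G.Adj v w ∧ IsSupport G w ∧ deg G w = 3) ∨
        (∃ w u : V, G.Adj v w ∧ G.Adj w u ∧ u ≠ v ∧ deg G w = 2 ∧ deg G u = 2) :=
  stmt_15' G hT hn hex
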